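/- Let B, R > 0, ℓ > 2R, h > 0, and let m, m' be arbitrary real numbers. Set x₂* = −i·√(ℓ²/4 − R²) and K_ℓ = (ℓ + √(ℓ² − 4R²))/(2R). Then the h-dependent phase satisfies the exact identity s_h(0, x₂*) = (Bℓ/4)·√(ℓ² − 4R²) − h·(m + m')·ln(K_ℓ). -/

import Mathlib

/-- The `h`-dependent phase function `s_h` of the paper, with parameters `B`, `R`, `ℓ`, `h`
and angular momenta `m`, `m'`, using the principal branch `Complex.log`. -/
noncomputable def sh (B R ℓ h m m' : ℝ) (x₁ x₂ : ℂ) : ℂ :=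
  ((B : ℂ) / 4) * (x₁ + (ℓ : ℂ) / 2) ^ 2 + ((B : ℂ) / 4) * (x₁ - (ℓ : ℂ) / 2) ^ 2
    + ((B : ℂ) / 2) * x₂ ^ 2 - (B : ℂ) * (R : ℂ) ^ 2 / 2
    + Complex.I * ((B : ℂ) * (ℓ : ℂ) / 2) * x₂
    - (h : ℂ) * (m : ℂ) * Complex.log (((ℓ : ℂ) / 2 + x₁ + Complex.I * x₂) / (R : ℂ))
    - (h : ℂ) * (m' : ℂ) * Complex.log (((ℓ : ℂ) / 2 - x₁ + Complex.I * x₂) / (R : ℂ))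

/-- exact identity for the critical value of the `h`-dependent phase:
`s_h(0, x₂*) = (Bℓ/4)√(ℓ² − 4R²) − h(m + m')·ln K_ℓ` with
`K_ℓ = (ℓ + √(ℓ² − 4R²))/(2R)`. -/
theorem sh_critical_value (B R ℓ h m m' : ℝ) (hB : 0 < B) (hR : 0 < R) (hℓ : 2 * R < ℓ)
    (hh : 0 < h) :
    sh B R ℓ h m m' 0 (-(Complex.I * (Real.sqrt (ℓ ^ 2 / 4 - R ^ 2) : ℂ)))
      = ((B * ℓ / 4 * Real.sqrt (ℓ ^ 2 - 4 * R ^ 2)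
          - h * (m + m') * Real.log ((ℓ + Real.sqrt (ℓ ^ 2 - 4 * R ^ 2)) / (2 * R)) : ℝ) : ℂ) := by
  have hRl : 0 < ℓ := lt_trans (by positivity) hℓ
  have ha_nonneg : (0:ℝ) ≤ ℓ ^ 2 / 4 - R ^ 2 := by nlinarith
  set a := Real.sqrt (ℓ ^ 2 / 4 - R ^ 2) with ha
  have ha0 : 0 ≤ a := Real.sqrt_nonneg _
  have ha2 : a ^ 2 = ℓ ^ 2 / 4 - R ^ 2 := Real.sq_sqrt ha_nonneg
  have hbb : Real.sqrt (ℓ ^ 2 - 4 * R ^ 2) = 2 * a := by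
    rw [show ℓ ^ 2 - 4 * R ^ 2 = 2 ^ 2 * (ℓ ^ 2 / 4 - R ^ 2) by ring,
      Real.sqrt_mul (by norm_num), Real.sqrt_sq (by norm_num)]
  set t : ℝ := (ℓ / 2 + a) / R with ht
  have ht0 : 0 < t := by positivity
  have key : ((ℓ : ℂ) / 2 + Complex.I * (-(Complex.I * (a : ℂ)))) / (R : ℂ) = (t : ℂ) := by
    have hRne : (R : ℂ) ≠ 0 := by exact_mod_cast hR.ne'
    rw [ht]
    push_cast
    field_simp
    ring_nf
    rw [Complex.I_sq]
    ring
  have hlog1 : Complex.log (((ℓ : ℂ) / 2 + 0 + Complex.I *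
      (-(Complex.I * (a : ℂ)))) / (R : ℂ)) = (Real.log t : ℂ) := by
    rw [add_zero, key, Complex.ofReal_log ht0.le]
  have hlog2 : Complex.log (((ℓ : ℂ) / 2 - 0 + Complex.I *
      (-(Complex.I * (a : ℂ)))) / (R : ℂ)) = (Real.log t : ℂ) := by
    rw [sub_zero, key, Complex.ofReal_log ht0.le]
  have hlogK : Real.log ((ℓ + 2 * a) / (2 * R)) = Real.log t := by
    rw [ht]
    congr 1
    field_simp
  rw [sh, hlog1, hlog2, hbb, hlogK]
  have hc2 : ((a : ℝ) : ℂ) ^ 2 = (ℓ : ℂ) ^ 2 / 4 - (R : ℂ) ^ 2 := by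
    exact_mod_cast congrArg (Complex.ofReal) ha2
  push_cast
  linear_combination (((B : ℂ) / 2) * (a : ℂ) ^ 2 - (B : ℂ) * (ℓ : ℂ) * (a : ℂ) / 2) * Complex.I_sq
    + (-(B : ℂ) / 2) * hc2
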